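/- Evaluation at points gives a bijection between ℝⁿ and the set of ℝ-algebra homomorphisms C^∞(ℝⁿ, ℝ) → ℝ. Concretely: every ℝ-algebra homomorphism φ : C^∞(ℝⁿ, ℝ) → ℝ is evaluation at a unique point p ∈ ℝⁿ, namely p = (φ(x₁), ..., φ(xₙ)) where xᵢ are the coordinate functions. -/

import Mathlib

open scoped Manifold
noncomputable section
abbrev En (n : ℕ) : Type := EuclideanSpace ℝ (Fin n)
abbrev Cinf (n : ℕ) : Type := C^(⊤ : ℕ∞)⟮𝓘(ℝ, En n), En n; 𝓘(ℝ, ℝ), ℝ⟯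
def mIdeal {n : ℕ} (p : En n) : Ideal (Cinf n) := RingHom.ker (ContMDiffMap.evalRingHom p)
/-- The i-th coordinate function as a smooth function on ℝⁿ. -/
def coordFn {n : ℕ} (i : Fin n) : Cinf n :=
  ⟨fun x => x i, ((EuclideanSpace.proj i : En n →L[ℝ] ℝ).contMDiff : ContMDiff _ _ _ _)⟩

lemma pos_is_unit {n : ℕ} (g : Cinf n) (hg : ∀ x, 0 < g x) : IsUnit g := by
  refine IsUnit.of_mul_eq_one (a := g)
    ⟨fun x => (g x)⁻¹, ContDiff.contMDiff (g.contMDiff.contDiff.inv fun x => (hg x).ne')⟩ ?_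
  ext x
  exact mul_inv_cancel₀ (hg x).ne'

lemma key {n : ℕ} (φ : Cinf n →ₐ[ℝ] ℝ) (f : Cinf n) :
    φ f = f (WithLp.toLp 2 (fun i => φ (coordFn i)) : En n) := by
  set p : En n := WithLp.toLp 2 (fun i => φ (coordFn i)) with hp
  by_contra hne
  set h : Cinf n := f - algebraMap ℝ _ (φ f) with hh
  set g : Cinf n :=
    h * h + ∑ i, (coordFn i - algebraMap ℝ _ (p i)) * (coordFn i - algebraMap ℝ _ (p i)) with hg
  have heval : ∀ x : En n,
      g x = h x * h x + ∑ i, (x i - p i) * (x i - p i) := by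
    intro x
    have := map_sum (ContMDiffMap.evalRingHom x : Cinf n →+* ℝ)
      (fun i => (coordFn i - algebraMap ℝ _ (p i)) * (coordFn i - algebraMap ℝ _ (p i)))
      Finset.univ
    simp only [hg, ContMDiffMap.coe_add, ContMDiffMap.coe_mul, Pi.add_apply, Pi.mul_apply]
    rw [show (∑ i, (coordFn i - algebraMap ℝ (Cinf n) (p i)) *
        (coordFn i - algebraMap ℝ (Cinf n) (p i))) x
        = (ContMDiffMap.evalRingHom x) (∑ i, (coordFn i - algebraMap ℝ (Cinf n) (p i)) *
        (coordFn i - algebraMap ℝ (Cinf n) (p i))) from rfl, this]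
    rfl
  have hgpos : ∀ x, 0 < g x := by
    intro x
    rw [heval]
    rcases eq_or_ne x p with heq | hxp
    · have hhx : h x ≠ 0 := by
        simp only [hh, ContMDiffMap.coe_sub, Pi.sub_apply]
        have h2 : (algebraMap ℝ (Cinf n) (φ f)) x = φ f := rfl
        rw [h2, sub_ne_zero, heq]
        exact fun e => hne e.symm
      refine lt_add_of_pos_of_le (mul_self_pos.mpr hhx)
        (Finset.sum_nonneg fun i _ => mul_self_nonneg _)
    · have : ∃ i, x i ≠ p i := by
        by_contra hc
        push_neg at hc
        exact hxp (PiLp.ext hc)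
      obtain ⟨i, hi⟩ := this
      have h1 : 0 < ∑ j, (x j - p j) * (x j - p j) :=
        Finset.sum_pos' (fun j _ => mul_self_nonneg _)
          ⟨i, Finset.mem_univ i, mul_self_pos.mpr (sub_ne_zero.mpr hi)⟩
      exact add_pos_of_nonneg_of_pos (mul_self_nonneg _) h1
  have hunit : IsUnit g := pos_is_unit g hgpos
  have hφg : φ g ≠ 0 := by
    obtain ⟨u, hu⟩ := hunit
    intro h0
    have := u.mul_inv
    have h1 : φ (↑u * ↑u⁻¹) = 1 := by rw [this, map_one]
    rw [map_mul, hu, h0, zero_mul] at h1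
    exact zero_ne_one h1
  apply hφg
  have hφh : φ h = 0 := by
    rw [hh, map_sub, AlgHom.commutes, Algebra.algebraMap_self_apply, sub_self]
  rw [hg, map_add, map_mul, hφh, mul_zero, map_sum, zero_add]
  refine Finset.sum_eq_zero fun i _ => ?_
  rw [map_mul, map_sub, AlgHom.commutes, Algebra.algebraMap_self_apply, hp, sub_self, zero_mul]

theorem algHom_is_evaluation (n : ℕ) :
    (∀ φ : Cinf n →ₐ[ℝ] ℝ, ∃! p : En n, ∀ f : Cinf n, φ f = f p) ∧
    (∀ φ : Cinf n →ₐ[ℝ] ℝ, ∀ f : Cinf n,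
      φ f = f (WithLp.toLp 2 (fun i => φ (coordFn i)) : En n)) := by
  constructor
  · intro φ
    refine ⟨(WithLp.toLp 2 (fun i => φ (coordFn i)) : En n), fun f => key φ f, ?_⟩
    intro q hq
    ext i
    have := hq (coordFn i)
    exact this.symm
  · exact fun φ f => key φ f
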